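/- arXiv:2106.05031 — 2 statements merged into one kernel-verified Lean document; each statement's English description precedes it below -/
import Mathlib

section
/- Sauer's lemma: if a class G of subsets of a set Z has VC dimension at most v, then for any ℓ points z_1,…,z_ℓ in Z, the number of distinct subsets of {z_1,…,z_ℓ} of the form {z_1,…,z_ℓ} ∩ G with G ∈ G is at most Σ_{j=0}^{v} C(ℓ, j), which in turn is at most (ℓe/v)^v when ℓ ≥ v ≥ 1. -/
open Finset

lemma sauer_analytic (v ℓ : ℕ) (hv : 1 ≤ v) (hvl : v ≤ ℓ) :
    ((∑ j ∈ Finset.range (v + 1), ℓ.choose j : ℕ) : ℝ)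
      ≤ ((ℓ : ℝ) * Real.exp 1 / v) ^ v := by
  have hℓ0 : (0:ℝ) < ℓ := by
    have : 1 ≤ ℓ := hv.trans hvl
    exact_mod_cast Nat.lt_of_lt_of_le Nat.zero_lt_one this
  have hv0 : (0:ℝ) < v := by exact_mod_cast hv
  set x : ℝ := (v:ℝ) / ℓ with hxdef
  have hx0 : 0 < x := by positivity
  have hx1 : x ≤ 1 := by
    rw [hxdef, div_le_one hℓ0]; exact_mod_cast hvl
  have key : x ^ v * ((∑ j ∈ Finset.range (v + 1), ℓ.choose j : ℕ) : ℝ)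
      ≤ Real.exp v := by
    have h1 : x ^ v * ((∑ j ∈ Finset.range (v + 1), ℓ.choose j : ℕ) : ℝ)
        ≤ ∑ j ∈ Finset.range (v + 1), (ℓ.choose j : ℝ) * x ^ j := by
      push_cast
      rw [Finset.mul_sum]
      refine Finset.sum_le_sum fun j hj => ?_
      rw [mul_comm]
      refine mul_le_mul_of_nonneg_left ?_ (by positivity)
      exact pow_le_pow_of_le_one hx0.le hx1 (Nat.lt_succ_iff.mp (Finset.mem_range.mp hj))
    have h2 : ∑ j ∈ Finset.range (v + 1), (ℓ.choose j : ℝ) * x ^ j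
        ≤ ∑ j ∈ Finset.range (ℓ + 1), (ℓ.choose j : ℝ) * x ^ j := by
      refine Finset.sum_le_sum_of_subset_of_nonneg ?_ (fun j _ _ => by positivity)
      exact Finset.range_subset_range.mpr (by omega)
    have h3 : ∑ j ∈ Finset.range (ℓ + 1), (ℓ.choose j : ℝ) * x ^ j = (x + 1) ^ ℓ := by
      rw [add_pow]
      refine Finset.sum_congr rfl fun j hj => ?_
      ring
    have h4 : (x + 1) ^ ℓ ≤ Real.exp v := by
      have := Real.add_one_le_exp x
      calc (x + 1) ^ ℓ ≤ Real.exp x ^ ℓ := by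
            refine pow_le_pow_left₀ (by positivity) (by linarith) ℓ
        _ = Real.exp (x * ℓ) := by rw [← Real.exp_nat_mul]; ring_nf
        _ = Real.exp v := by rw [hxdef]; field_simp
    linarith
  have hfx : ((ℓ : ℝ) * Real.exp 1 / v) = Real.exp 1 / x := by
    rw [hxdef]; field_simp
  have hpow : Real.exp 1 ^ v = Real.exp v := by
    rw [← Real.exp_nat_mul]; ring_nf
  rw [hfx, div_pow, hpow, le_div_iff₀ (by positivity), mul_comm]
  exact key



/-- Sauer's lemma: growth function bound for a class of subsets with VC dimension at most `v`. -/
theorem stmt3 {Z : Type*} (𝒢 : Set (Set Z)) (v ℓ : ℕ)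
    (hVC : ∀ S : Finset Z,
      (∀ B ⊆ S, ∃ G ∈ 𝒢, (S : Set Z) ∩ G = (B : Set Z)) → S.card ≤ v)
    (z : Fin ℓ → Z) :
    ({A : Set Z | ∃ G ∈ 𝒢, A = Set.range z ∩ G}).ncard
        ≤ ∑ j ∈ Finset.range (v + 1), ℓ.choose j
    ∧ (1 ≤ v → v ≤ ℓ →
        ((∑ j ∈ Finset.range (v + 1), ℓ.choose j : ℕ) : ℝ)
          ≤ ((ℓ : ℝ) * Real.exp 1 / v) ^ v) := by

  classical
  refine ⟨?_, fun hv hvl => sauer_analytic v ℓ hv hvl⟩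
  set S : Finset Z := Finset.univ.image z with hSdef
  have hSrange : (S : Set Z) = Set.range z := by
    ext a; simp [hSdef]
  set 𝒜 : Finset (Finset Z) :=
    S.powerset.filter (fun A => ∃ G ∈ 𝒢, (S : Set Z) ∩ G = (A : Set Z)) with h𝒜
  have hset : {A : Set Z | ∃ G ∈ 𝒢, A = Set.range z ∩ G}
      = (fun A : Finset Z => (A : Set Z)) '' ↑𝒜 := by
    ext A
    simp only [Set.mem_setOf_eq, Set.mem_image, Finset.mem_coe, h𝒜, Finset.mem_filter,
      Finset.mem_powerset]
    constructor
    · rintro ⟨G, hG, rfl⟩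
      refine ⟨S.filter (· ∈ G), ⟨Finset.filter_subset _ _, G, hG, ?_⟩, ?_⟩
      · ext a; simp
      · ext a
        simp only [Finset.coe_filter, Set.mem_setOf_eq, Set.mem_inter_iff, Finset.mem_coe]
        rw [← hSrange]
        simp
    · rintro ⟨B, ⟨hBS, G, hG, hBG⟩, rfl⟩
      exact ⟨G, hG, by rw [← hSrange, hBG]⟩
  rw [hset, Set.ncard_image_of_injective _ Finset.coe_injective, Set.ncard_coe_finset]
  have hSℓ : S.card ≤ ℓ := by
    calc S.card ≤ Finset.univ.card := Finset.card_image_le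
      _ = ℓ := by simp
  have hsub : 𝒜.shatterer ⊆ (Finset.range (v + 1)).biUnion (fun j => S.powersetCard j) := by
    intro s hs
    have hsh := Finset.mem_shatterer.mp hs
    have hsS : s ⊆ S := by
      obtain ⟨u, hu, hsu⟩ := hsh.exists_superset
      exact hsu.trans (Finset.mem_powerset.mp (Finset.mem_filter.mp hu).1)
    have hsv : s.card ≤ v := by
      refine hVC s (fun B hB => ?_)
      obtain ⟨u, hu, hsu⟩ := hsh hB
      obtain ⟨-, G, hG, hSG⟩ := Finset.mem_filter.mp hu
      refine ⟨G, hG, ?_⟩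
      have h1 : (s : Set Z) ∩ G = (s : Set Z) ∩ ((S : Set Z) ∩ G) := by
        rw [← Set.inter_assoc, Set.inter_eq_left.mpr (Finset.coe_subset.mpr hsS)]
      rw [h1, hSG, ← Finset.coe_inter, hsu]
    exact Finset.mem_biUnion.mpr ⟨s.card, Finset.mem_range.mpr (by omega),
      Finset.mem_powersetCard.mpr ⟨hsS, rfl⟩⟩
  calc 𝒜.card ≤ 𝒜.shatterer.card := Finset.card_le_card_shatterer 𝒜
    _ ≤ ((Finset.range (v + 1)).biUnion (fun j => S.powersetCard j)).card :=
        Finset.card_le_card hsub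
    _ ≤ ∑ j ∈ Finset.range (v + 1), (S.powersetCard j).card := Finset.card_biUnion_le
    _ = ∑ j ∈ Finset.range (v + 1), S.card.choose j := by
        simp [Finset.card_powersetCard]
    _ ≤ ∑ j ∈ Finset.range (v + 1), ℓ.choose j :=
        Finset.sum_le_sum fun j _ => Nat.choose_le_choose j hSℓ
end

section
/- Backward-induction recursion bound: let ΔQ_t and ΔQ_t† be nonnegative real numbers for t = 1,…,T, and let κ_1,…,κ_{T−1} ∈ (0,1]. Suppose ΔQ_T = ΔQ_T† and for every k = 1,…,T−1, ΔQ_{T−k} ≤ Σ_{s=T−k+1}^{T} (1/∏_{ℓ=T−k}^{s−1} κ_ℓ)·ΔQ_s + ΔQ_{T−k}†. Then ΔQ_1 ≤ ΔQ_1† + Σ_{s=1}^{T−1} (2^{s−1}/∏_{t=1}^{s} κ_t)·ΔQ_{s+1}†. -/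
/-- Backward-induction recursion bound for the regret terms `ΔQ_t`. -/
theorem stmt10 (T : ℕ) (hT : 1 ≤ T) (Q Qd κ : ℕ → ℝ)
    (hQ : ∀ t, 1 ≤ t → t ≤ T → 0 ≤ Q t)
    (hQd : ∀ t, 1 ≤ t → t ≤ T → 0 ≤ Qd t)
    (hκ : ∀ t, 1 ≤ t → t ≤ T - 1 → 0 < κ t ∧ κ t ≤ 1)
    (hbase : Q T = Qd T)
    (hrec : ∀ k, 1 ≤ k → k ≤ T - 1 →
      Q (T - k) ≤ (∑ s ∈ Finset.Icc (T - k + 1) T,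
        (∏ ℓ ∈ Finset.Icc (T - k) (s - 1), κ ℓ)⁻¹ * Q s) + Qd (T - k)) :
    Q 1 ≤ Qd 1 + ∑ s ∈ Finset.Icc 1 (T - 1),
      ((2 : ℝ) ^ (s - 1) / ∏ t ∈ Finset.Icc 1 s, κ t) * Qd (s + 1) := by
  -- reformulated recursion
  have hrec' : ∀ j, 1 ≤ j → j ≤ T - 1 →
      Q j ≤ (∑ s ∈ Finset.Icc (j + 1) T,
        (∏ ℓ ∈ Finset.Icc j (s - 1), κ ℓ)⁻¹ * Q s) + Qd j := by
    intro j hj1 hj2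
    have hk1 : 1 ≤ T - j := by omega
    have hk2 : T - j ≤ T - 1 := by omega
    have := hrec (T - j) hk1 hk2
    rwa [Nat.sub_sub_self (by omega : j ≤ T)] at this
  have key : ∀ d j, 1 ≤ j → j + d = T - 1 →
      (∑ s ∈ Finset.Icc (j + 1) T, (∏ ℓ ∈ Finset.Icc j (s - 1), κ ℓ)⁻¹ * Q s)
        ≤ ∑ s ∈ Finset.Icc j (T - 1),
            ((2 : ℝ) ^ (s - j) / ∏ t ∈ Finset.Icc j s, κ t) * Qd (s + 1) := by
    intro d
    induction d with
    | zero =>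
      intro j hj1 hj2
      have hTj : T = j + 1 := by omega
      subst hTj
      simp only [Nat.add_sub_cancel, Finset.Icc_self, Finset.sum_singleton,
        Finset.prod_singleton, Nat.sub_self, pow_zero, one_div]
      rw [hbase]
    | succ d ih =>
      intro j hj1 hj2
      have hj2' : j + 1 ≤ T - 1 := by omega
      have hκj := hκ j hj1 (by omega)
      have hκj0 : κ j ≠ 0 := ne_of_gt hκj.1
      have IH := ih (j + 1) (by omega) (by omega)
      -- split LHS
      have hLHS : (∑ s ∈ Finset.Icc (j + 1) T, (∏ ℓ ∈ Finset.Icc j (s - 1), κ ℓ)⁻¹ * Q s)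
          = (κ j)⁻¹ * (Q (j + 1) +
            ∑ s ∈ Finset.Icc (j + 1 + 1) T, (∏ ℓ ∈ Finset.Icc (j + 1) (s - 1), κ ℓ)⁻¹ * Q s) := by
        have hins : Finset.Icc (j + 1) T = insert (j + 1) (Finset.Icc (j + 1 + 1) T) := by
          ext x; simp [Finset.mem_Icc]; omega
        rw [hins, Finset.sum_insert (by simp), Nat.add_sub_cancel, Finset.Icc_self,
          Finset.prod_singleton]
        rw [mul_add, Finset.mul_sum]
        congr 1
        apply Finset.sum_congr rfl
        intro s hs
        have hs2 : j + 1 + 1 ≤ s := (Finset.mem_Icc.mp hs).1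
        have hprod : (∏ ℓ ∈ Finset.Icc j (s - 1), κ ℓ)
            = κ j * ∏ ℓ ∈ Finset.Icc (j + 1) (s - 1), κ ℓ := by
          have h2 : Finset.Icc j (s - 1) = insert j (Finset.Icc (j + 1) (s - 1)) := by
            ext x; simp [Finset.mem_Icc]; omega
          rw [h2, Finset.prod_insert (by simp)]
        rw [hprod, mul_inv, mul_assoc]
      -- split RHS
      have hRHS : (∑ s ∈ Finset.Icc j (T - 1),
            ((2 : ℝ) ^ (s - j) / ∏ t ∈ Finset.Icc j s, κ t) * Qd (s + 1))
          = (κ j)⁻¹ * (Qd (j + 1) +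
            2 * ∑ s ∈ Finset.Icc (j + 1) (T - 1),
              ((2 : ℝ) ^ (s - (j + 1)) / ∏ t ∈ Finset.Icc (j + 1) s, κ t) * Qd (s + 1)) := by
        have hins : Finset.Icc j (T - 1) = insert j (Finset.Icc (j + 1) (T - 1)) := by
          ext x; simp [Finset.mem_Icc]; omega
        rw [hins, Finset.sum_insert (by simp)]
        have h1 : ((2 : ℝ) ^ (j - j) / ∏ t ∈ Finset.Icc j j, κ t) * Qd (j + 1)
            = (κ j)⁻¹ * Qd (j + 1) := by
          rw [Nat.sub_self, pow_zero, Finset.Icc_self, Finset.prod_singleton, one_div]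
        have h2 : (∑ s ∈ Finset.Icc (j + 1) (T - 1),
              ((2 : ℝ) ^ (s - j) / ∏ t ∈ Finset.Icc j s, κ t) * Qd (s + 1))
            = (κ j)⁻¹ * (2 * ∑ s ∈ Finset.Icc (j + 1) (T - 1),
              ((2 : ℝ) ^ (s - (j + 1)) / ∏ t ∈ Finset.Icc (j + 1) s, κ t) * Qd (s + 1)) := by
          rw [Finset.mul_sum, Finset.mul_sum]
          apply Finset.sum_congr rfl
          intro s hs
          have hs1 : j + 1 ≤ s := (Finset.mem_Icc.mp hs).1
          have hpow : (2 : ℝ) ^ (s - j) = 2 * 2 ^ (s - (j + 1)) := by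
            have : s - j = (s - (j + 1)) + 1 := by omega
            rw [this, pow_succ]; ring
          have hprod : (∏ t ∈ Finset.Icc j s, κ t)
              = κ j * ∏ t ∈ Finset.Icc (j + 1) s, κ t := by
            have h3 : Finset.Icc j s = insert j (Finset.Icc (j + 1) s) := by
              ext x; simp [Finset.mem_Icc]; omega
            rw [h3, Finset.prod_insert (by simp)]
          rw [hpow, hprod]
          simp only [div_eq_mul_inv, mul_inv]
          ring
        rw [h1, h2, mul_add]
      rw [hLHS, hRHS]
      have hQrec := hrec' (j + 1) (by omega) hj2'
      have hbound : Q (j + 1) +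
            (∑ s ∈ Finset.Icc (j + 1 + 1) T, (∏ ℓ ∈ Finset.Icc (j + 1) (s - 1), κ ℓ)⁻¹ * Q s)
          ≤ Qd (j + 1) +
            2 * ∑ s ∈ Finset.Icc (j + 1) (T - 1),
              ((2 : ℝ) ^ (s - (j + 1)) / ∏ t ∈ Finset.Icc (j + 1) s, κ t) * Qd (s + 1) := by
        linarith
      exact mul_le_mul_of_nonneg_left hbound (inv_nonneg.mpr hκj.1.le)
  rcases Nat.lt_or_ge T 2 with hT2 | hT2
  · have hT1 : T = 1 := by omega
    subst hT1
    simp [hbase]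
  · have hQ1 := hrec' 1 le_rfl (by omega)
    have hkey := key (T - 2) 1 le_rfl (by omega)
    linarith
end
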